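/- arXiv:1710.06191 — 5 statements merged into one kernel-verified Lean document; each statement's English description precedes it below -/
import Mathlib

section
/- (Davis–Kahan with optimal rotation.) Let A and A* be n×n real symmetric matrices with eigenvalues ordered by decreasing absolute value, and suppose A* has rank K with K-th largest absolute eigenvalue |σ*_K| > 0. Let V₁ and V*₁ contain orthonormal eigenvectors of A and A* corresponding to their K largest-in-absolute-value eigenvalues. Suppose ‖A − A*‖ ≤ γ with |σ*_K| − γ > 0. Let V₁ᵀV*₁ have singular value decomposition O₁ Ω O₂ᵀ and set O = O₁O₂ᵀ. Then ‖V₁ O − V*₁‖ ≤ √2 ‖(A − A*) V*₁‖ / (|σ*_K| − γ). -/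
open scoped BigOperators Matrix

/-- Spectral (operator `ℓ²→ℓ²`) norm of a real matrix. -/
noncomputable def specNorm {m n : ℕ} (M : Matrix (Fin m) (Fin n) ℝ) : ℝ :=
  ‖LinearMap.toContinuousLinearMap (Matrix.toEuclideanLin M)‖

open scoped Matrix.Norms.L2Operator

lemma specNorm_eq {m n : ℕ} (M : Matrix (Fin m) (Fin n) ℝ) : specNorm M = ‖M‖ := rfl

lemma ct_eq {m n : ℕ} (M : Matrix (Fin m) (Fin n) ℝ) : Mᴴ = Mᵀ := by
  ext i j; simp [Matrix.conjTranspose_apply]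

lemma norm_transpose {m n : ℕ} (M : Matrix (Fin m) (Fin n) ℝ) : ‖Mᵀ‖ = ‖M‖ := by
  rw [← ct_eq]; exact Matrix.l2_opNorm_conjTranspose M

lemma norm_tmul {m n : ℕ} (M : Matrix (Fin m) (Fin n) ℝ) : ‖Mᵀ * M‖ = ‖M‖ * ‖M‖ := by
  rw [← ct_eq]; exact Matrix.l2_opNorm_conjTranspose_mul_self M

lemma norm_diagonal_le {k : ℕ} (w : Fin k → ℝ) (C : ℝ) (hC : 0 ≤ C)
    (h : ∀ i, |w i| ≤ C) : ‖Matrix.diagonal w‖ ≤ C := by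
  rw [Matrix.l2_opNorm_def]
  apply ContinuousLinearMap.opNorm_le_bound _ hC
  intro x
  simp only [LinearEquiv.trans_apply, LinearMap.coe_toContinuousLinearMap']
  rw [Matrix.toEuclideanLin_apply]
  rw [EuclideanSpace.norm_eq, EuclideanSpace.norm_eq]
  rw [← Real.sqrt_sq hC, ← Real.sqrt_mul (by positivity)]
  apply Real.sqrt_le_sqrt
  rw [Finset.mul_sum]
  apply Finset.sum_le_sum
  intro i _
  simp only [WithLp.ofLp_toLp]
  rw [Matrix.mulVec_diagonal]
  have h1 : ‖w i * x.ofLp i‖ ^ 2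
      = w i ^ 2 * ‖x.ofLp i‖ ^ 2 := by
    rw [norm_mul, mul_pow]; rw [Real.norm_eq_abs, sq_abs]
  rw [h1]
  apply mul_le_mul_of_nonneg_right _ (by positivity)
  calc w i ^ 2 = |w i| ^ 2 := by rw [sq_abs]
  _ ≤ C ^ 2 := by apply pow_le_pow_left₀ (abs_nonneg _) (h i)

lemma abs_le_norm_diagonal {k : ℕ} (w : Fin k → ℝ) (i : Fin k) :
    |w i| ≤ ‖Matrix.diagonal w‖ := by
  have := Matrix.l2_opNorm_mulVec (Matrix.diagonal w) (EuclideanSpace.single i 1)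
  rw [EuclideanSpace.norm_single] at this
  have h2 : (Matrix.diagonal w) *ᵥ (EuclideanSpace.single i (1:ℝ) : Fin k → ℝ)
      = Pi.single i (w i) := by
    have : (EuclideanSpace.single i (1:ℝ) : Fin k → ℝ) = Pi.single i 1 := rfl
    rw [this, Matrix.diagonal_mulVec_single, mul_one]
  rw [h2] at this
  have h3 : ‖(EuclideanSpace.equiv (Fin k) ℝ).symm (Pi.single i (w i))‖ = |w i| := by
    have : (EuclideanSpace.equiv (Fin k) ℝ).symm (Pi.single i (w i))
        = EuclideanSpace.single i (w i) := rfl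
    rw [this, EuclideanSpace.norm_single, Real.norm_eq_abs]
  rw [h3] at this
  simpa using this

lemma norm_one_le {k : ℕ} : ‖(1 : Matrix (Fin k) (Fin k) ℝ)‖ ≤ 1 := by
  rw [← Matrix.diagonal_one]
  exact norm_diagonal_le _ 1 zero_le_one (fun i => by simp)

lemma norm_le_one_of_orth {m k : ℕ} (M : Matrix (Fin m) (Fin k) ℝ)
    (hM : Mᵀ * M = 1) : ‖M‖ ≤ 1 := by
  have h := norm_tmul M
  rw [hM] at h
  nlinarith [norm_nonneg M, norm_one_le (k := k)]

lemma norm_orth_mul {m k r : ℕ} (U : Matrix (Fin m) (Fin k) ℝ) (hU : Uᵀ * U = 1)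
    (M : Matrix (Fin k) (Fin r) ℝ) : ‖U * M‖ = ‖M‖ := by
  apply le_antisymm
  · calc ‖U * M‖ ≤ ‖U‖ * ‖M‖ := Matrix.l2_opNorm_mul U M
    _ ≤ 1 * ‖M‖ := by
        apply mul_le_mul_of_nonneg_right (norm_le_one_of_orth U hU) (norm_nonneg M)
    _ = ‖M‖ := one_mul _
  · calc ‖M‖ = ‖Uᵀ * (U * M)‖ := by rw [← Matrix.mul_assoc, hU, Matrix.one_mul]
    _ ≤ ‖Uᵀ‖ * ‖U * M‖ := Matrix.l2_opNorm_mul _ _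
    _ ≤ 1 * ‖U * M‖ := by
        apply mul_le_mul_of_nonneg_right _ (norm_nonneg _)
        rw [norm_transpose]; exact norm_le_one_of_orth U hU
    _ = ‖U * M‖ := one_mul _

lemma norm_mul_orth {m k r : ℕ} (M : Matrix (Fin r) (Fin k) ℝ)
    (U : Matrix (Fin m) (Fin k) ℝ) (hU : Uᵀ * U = 1) : ‖M * Uᵀ‖ = ‖M‖ := by
  have : M * Uᵀ = (U * Mᵀ)ᵀ := by rw [Matrix.transpose_mul, Matrix.transpose_transpose]
  rw [this, norm_transpose, norm_orth_mul U hU, norm_transpose]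

noncomputable def Jmat (n K : ℕ) (h : K ≤ n) : Matrix (Fin n) (Fin K) ℝ :=
  (1 : Matrix (Fin n) (Fin n) ℝ).submatrix id (Fin.castLE h)

lemma Jmat_apply {n K : ℕ} (h : K ≤ n) (i : Fin n) (k : Fin K) :
    Jmat n K h i k = if i = Fin.castLE h k then 1 else 0 := by
  simp [Jmat, Matrix.one_apply]

lemma mul_Jmat {n K m : ℕ} (h : K ≤ n) (M : Matrix (Fin m) (Fin n) ℝ) :
    M * Jmat n K h = M.submatrix id (Fin.castLE h) := by
  ext i k
  simp only [Matrix.mul_apply, Jmat_apply, mul_ite, mul_one, mul_zero]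
  rw [Finset.sum_ite_eq' Finset.univ (Fin.castLE h k) (fun j => M i j)]
  simp

lemma Jmat_tmul {n K : ℕ} (h : K ≤ n) : (Jmat n K h)ᵀ * Jmat n K h = 1 := by
  ext k l
  simp only [Matrix.mul_apply, Matrix.transpose_apply, Jmat_apply, ite_mul, one_mul, zero_mul]
  rw [Finset.sum_ite_eq' Finset.univ (Fin.castLE h k) (fun j => if j = Fin.castLE h l then (1:ℝ) else 0)]
  simp only [Finset.mem_univ, if_true]
  by_cases hkl : k = l
  · subst hkl; simp [Matrix.one_apply]
  · have : ¬ (Fin.castLE h k = Fin.castLE h l) := by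
      intro hc; exact hkl (Fin.castLE_injective h hc)
    simp [Matrix.one_apply, this, hkl]

lemma Jmat_mult {n K : ℕ} (h : K ≤ n) :
    Jmat n K h * (Jmat n K h)ᵀ
      = Matrix.diagonal (fun i : Fin n => if (i : ℕ) < K then (1:ℝ) else 0) := by
  ext i j
  rw [Matrix.mul_apply]
  by_cases hij : i = j
  · subst hij
    rw [Matrix.diagonal_apply_eq]
    by_cases hi : (i : ℕ) < K
    · rw [if_pos hi, Finset.sum_eq_single (⟨(i:ℕ), hi⟩ : Fin K)]
      · simp [Jmat_apply, Fin.ext_iff]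
      · intro b _ hb
        have hne : i ≠ Fin.castLE h b := by
          intro hc; apply hb; apply Fin.ext; simp [Fin.ext_iff] at hc ⊢; omega
        simp [Jmat_apply, hne]
      · simp
    · rw [if_neg hi]
      apply Finset.sum_eq_zero
      intro b _
      have hne : i ≠ Fin.castLE h b := by
        intro hc; apply hi; rw [hc]; simpa using b.isLt
      simp [Jmat_apply, hne]
  · rw [Matrix.diagonal_apply_ne _ hij]
    apply Finset.sum_eq_zero
    intro b _
    by_cases h1 : i = Fin.castLE h b
    · have h2 : j ≠ Fin.castLE h b := fun hc => hij (h1.trans hc.symm)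
      simp [Jmat_apply, Matrix.transpose_apply, h2]
    · simp [Jmat_apply, Matrix.transpose_apply, h1]

lemma diag_mul_Jmat {n K : ℕ} (h : K ≤ n) (w : Fin n → ℝ) :
    Matrix.diagonal w * Jmat n K h = Jmat n K h * Matrix.diagonal (w ∘ Fin.castLE h) := by
  ext i k
  simp only [Matrix.mul_apply, Jmat_apply, Matrix.diagonal_apply, ite_mul, mul_ite,
    one_mul, mul_one, zero_mul, mul_zero, Function.comp]
  rw [Finset.sum_ite_eq' Finset.univ (Fin.castLE h k) (fun j => if i = j then w i else 0)]
  rw [Finset.sum_ite_eq' Finset.univ k (fun x => if i = Fin.castLE h x then w (Fin.castLE h x) else 0)]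
  simp only [Finset.mem_univ, if_true]
  by_cases hik : i = Fin.castLE h k
  · rw [if_pos hik, if_pos hik, hik]
  · rw [if_neg hik, if_neg hik]

lemma dp_tmul {m k : ℕ} (A : Matrix (Fin m) (Fin k) ℝ) (u : Fin k → ℝ) (y : Fin m → ℝ) :
    u ⬝ᵥ (Aᵀ *ᵥ y) = (A *ᵥ u) ⬝ᵥ y := by
  rw [Matrix.dotProduct_mulVec, Matrix.vecMul_transpose]

lemma dp_orth {m k : ℕ} (A : Matrix (Fin m) (Fin k) ℝ) (hA : Aᵀ * A = 1)
    (u v : Fin k → ℝ) : (A *ᵥ u) ⬝ᵥ (A *ᵥ v) = u ⬝ᵥ v := by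
  rw [← dp_tmul, Matrix.mulVec_mulVec, hA, Matrix.one_mulVec]

lemma norm_symm_eq_dp {k : ℕ} (w : Fin k → ℝ) :
    ‖(WithLp.equiv 2 (Fin k → ℝ)).symm w‖ ^ 2 = w ⬝ᵥ w := by
  rw [EuclideanSpace.norm_eq, Real.sq_sqrt (by positivity)]
  simp [dotProduct, Real.norm_eq_abs, sq_abs, sq]

lemma mulVec_dp_le {m k : ℕ} (M : Matrix (Fin m) (Fin k) ℝ) (v : Fin k → ℝ) :
    (M *ᵥ v) ⬝ᵥ (M *ᵥ v) ≤ ‖M‖ ^ 2 * (v ⬝ᵥ v) := by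
  have h := Matrix.l2_opNorm_mulVec M ((WithLp.equiv 2 (Fin k → ℝ)).symm v)
  have hv : (M *ᵥ (WithLp.equiv 2 (Fin k → ℝ)).symm v) = M *ᵥ v := rfl
  rw [hv] at h
  have h2 : ‖(EuclideanSpace.equiv (Fin m) ℝ).symm (M *ᵥ v)‖ ^ 2
      ≤ (‖M‖ * ‖(WithLp.equiv 2 (Fin k → ℝ)).symm v‖) ^ 2 := by
    apply pow_le_pow_left₀ (norm_nonneg _) h
  rw [mul_pow] at h2
  have e1 : ‖(EuclideanSpace.equiv (Fin m) ℝ).symm (M *ᵥ v)‖ ^ 2 = (M *ᵥ v) ⬝ᵥ (M *ᵥ v) :=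
    norm_symm_eq_dp _
  rw [e1, norm_symm_eq_dp] at h2
  exact h2

lemma Jmat_tmulVec {n K : ℕ} (h : K ≤ n) (y : Fin n → ℝ) (k : Fin K) :
    ((Jmat n K h)ᵀ *ᵥ y) k = y (Fin.castLE h k) := by
  simp only [Matrix.mulVec, dotProduct, Matrix.transpose_apply, Jmat_apply,
    ite_mul, one_mul, zero_mul]
  rw [Finset.sum_ite_eq' Finset.univ (Fin.castLE h k) y]
  simp

lemma Jmat_mulVec_hi {n K : ℕ} (h : K ≤ n) (v : Fin K → ℝ) (i : Fin n) (hi : K ≤ (i : ℕ)) :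
    (Jmat n K h *ᵥ v) i = 0 := by
  simp only [Matrix.mulVec, dotProduct]
  apply Finset.sum_eq_zero
  intro l _
  have : i ≠ Fin.castLE h l := by
    intro hc
    have := l.isLt
    rw [hc] at hi
    simp only [Fin.coe_castLE] at hi
    omega
  simp [Jmat_apply, this]

lemma dp_self_nonneg {k : ℕ} (v : Fin k → ℝ) : 0 ≤ v ⬝ᵥ v :=
  Finset.sum_nonneg fun i _ => mul_self_nonneg _

lemma weyl (n K : ℕ) (hKn : K ≤ n)
    (A Astar V Vstar : Matrix (Fin n) (Fin n) ℝ)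
    (d dstar : Fin n → ℝ)
    (hV : Vᵀ * V = 1) (hVstar : Vstarᵀ * Vstar = 1)
    (hAdec : A = V * Matrix.diagonal d * Vᵀ)
    (hAstardec : Astar = Vstar * Matrix.diagonal dstar * Vstarᵀ)
    (hd : ∀ i j : Fin n, i ≤ j → |d j| ≤ |d i|)
    (hrank : ∀ k : Fin n, K ≤ (k : ℕ) → dstar k = 0)
    (γ : ℝ) (hγ : 0 ≤ γ) (hAA : ‖A - Astar‖ ≤ γ) :
    ∀ i : Fin n, K ≤ (i : ℕ) → |d i| ≤ γ := by
  intro i hiK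
  have hKlt : K < n := lt_of_le_of_lt hiK i.isLt
  set K' : Fin n := ⟨K, hKlt⟩ with hK'
  have hle : K' ≤ i := hiK
  refine le_trans (hd K' i hle) ?_
  -- now show |d K'| ≤ γ
  have h1 : K + 1 ≤ n := hKlt
  set J : Matrix (Fin n) (Fin K) ℝ := Jmat n K hKn with hJ
  set J' : Matrix (Fin n) (Fin (K+1)) ℝ := Jmat n (K+1) h1 with hJ'
  set M : Matrix (Fin K) (Fin (K+1)) ℝ := Jᵀ * Vstarᵀ * V * J' with hM
  -- nontrivial kernel
  have hker : ∃ c₀ : Fin (K+1) → ℝ, c₀ ≠ 0 ∧ M *ᵥ c₀ = 0 := by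
    have hni : ¬ Function.Injective (Matrix.mulVecLin M) := by
      intro hinj
      have := LinearMap.finrank_le_finrank_of_injective hinj
      rw [Module.finrank_fin_fun, Module.finrank_fin_fun] at this
      omega
    rw [← LinearMap.ker_eq_bot] at hni
    rcases (Submodule.ne_bot_iff _).mp hni with ⟨c₀, hc₀mem, hc₀ne⟩
    exact ⟨c₀, hc₀ne, hc₀mem⟩
  rcases hker with ⟨c₀, hc₀ne, hMc₀⟩
  set c : Fin n → ℝ := J' *ᵥ c₀ with hc
  set x : Fin n → ℝ := V *ᵥ c with hx
  have hcc : c ⬝ᵥ c = c₀ ⬝ᵥ c₀ := dp_orth J' (Jmat_tmul h1) c₀ c₀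
  have hxx : x ⬝ᵥ x = c₀ ⬝ᵥ c₀ := by rw [hx, dp_orth V hV, hcc]
  have hc₀pos : 0 < c₀ ⬝ᵥ c₀ := by
    rcases lt_or_eq_of_le (dp_self_nonneg c₀) with h | h
    · exact h
    · exact absurd (dotProduct_self_eq_zero.mp h.symm) hc₀ne
  -- Astar x = 0
  have hAstarx : Astar *ᵥ x = 0 := by
    have hy : (Jᵀ *ᵥ (Vstarᵀ *ᵥ x)) = M *ᵥ c₀ := by
      rw [hx, hc, Matrix.mulVec_mulVec, Matrix.mulVec_mulVec, Matrix.mulVec_mulVec, hM]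
    have hyzero : ∀ j : Fin n, (j : ℕ) < K → (Vstarᵀ *ᵥ x) j = 0 := by
      intro j hj
      have := congrFun (hy.trans hMc₀) ⟨(j : ℕ), hj⟩
      rw [Jmat_tmulVec] at this
      simpa using this
    have hdiag : Matrix.diagonal dstar *ᵥ (Vstarᵀ *ᵥ x) = 0 := by
      funext j
      rw [Matrix.mulVec_diagonal]
      by_cases hj : (j : ℕ) < K
      · rw [hyzero j hj, mul_zero]; rfl
      · rw [hrank j (le_of_not_gt hj), zero_mul]; rfl
    rw [hAstardec, ← Matrix.mulVec_mulVec, ← Matrix.mulVec_mulVec, hdiag,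
      Matrix.mulVec_zero]
  -- A x = V (d * c)
  have hAx : A *ᵥ x = V *ᵥ (fun j => d j * c j) := by
    rw [hAdec, hx, Matrix.mulVec_mulVec, Matrix.mul_assoc (V * Matrix.diagonal d) Vᵀ V,
      hV, Matrix.mul_one, ← Matrix.mulVec_mulVec]
    have hdc : Matrix.diagonal d *ᵥ c = fun j => d j * c j := by
      funext j; rw [Matrix.mulVec_diagonal]
    rw [hdc]
  -- lower bound on (A x)⬝(A x)
  have hchi : ∀ j : Fin n, K < (j : ℕ) → c j = 0 := fun j hj =>
    Jmat_mulVec_hi h1 c₀ j hj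
  have hlow : d K' ^ 2 * (c₀ ⬝ᵥ c₀) ≤ (A *ᵥ x) ⬝ᵥ (A *ᵥ x) := by
    rw [hAx, dp_orth V hV]
    rw [← hcc]
    unfold dotProduct
    rw [Finset.mul_sum]
    apply Finset.sum_le_sum
    intro j _
    by_cases hj : (j : ℕ) ≤ K
    · have hjK : j ≤ K' := hj
      have habs : |d K'| ≤ |d j| := hd j K' hjK
      have h2 : d K' ^ 2 ≤ d j ^ 2 := by
        rw [← sq_abs (d K'), ← sq_abs (d j)]
        exact pow_le_pow_left₀ (abs_nonneg _) habs 2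
      calc d K' ^ 2 * (c j * c j) ≤ d j ^ 2 * (c j * c j) :=
            mul_le_mul_of_nonneg_right h2 (mul_self_nonneg _)
      _ = d j * c j * (d j * c j) := by ring
    · rw [hchi j (lt_of_not_ge hj)]
      simp only [mul_zero, zero_mul]
      exact mul_self_nonneg _
  -- upper bound
  have hup : (A *ᵥ x) ⬝ᵥ (A *ᵥ x) ≤ γ ^ 2 * (c₀ ⬝ᵥ c₀) := by
    have hsub : A *ᵥ x = (A - Astar) *ᵥ x := by
      rw [Matrix.sub_mulVec, hAstarx, sub_zero]
    rw [hsub, ← hxx]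
    calc ((A - Astar) *ᵥ x) ⬝ᵥ ((A - Astar) *ᵥ x) ≤ ‖A - Astar‖ ^ 2 * (x ⬝ᵥ x) :=
          mulVec_dp_le _ _
    _ ≤ γ ^ 2 * (x ⬝ᵥ x) := by
        apply mul_le_mul_of_nonneg_right _ (dp_self_nonneg x)
        exact pow_le_pow_left₀ (norm_nonneg _) hAA 2
  have hsq : d K' ^ 2 ≤ γ ^ 2 :=
    le_of_mul_le_mul_right (le_trans hlow hup) hc₀pos
  calc |d K'| = Real.sqrt (d K' ^ 2) := (Real.sqrt_sq_eq_abs _).symm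
  _ ≤ Real.sqrt (γ ^ 2) := Real.sqrt_le_sqrt hsq
  _ = γ := Real.sqrt_sq hγ

lemma idem_norm_le_one {x : ℝ} (hx : 0 ≤ x) (h : x * x = x) : x ≤ 1 := by nlinarith

lemma gap_helper {x r s g : ℝ} (h : s * x ≤ g * x + r) : (s - g) * x ≤ r := by nlinarith

lemma cancel_left {a b r : ℕ} (U : Matrix (Fin a) (Fin b) ℝ) (hU : Uᵀ * U = 1)
    (M : Matrix (Fin b) (Fin r) ℝ) : Uᵀ * (U * M) = M := by
  rw [← Matrix.mul_assoc, hU, Matrix.one_mul]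

set_option maxHeartbeats 2000000 in
/-- Davis–Kahan theorem with the optimal rotation `O = O₁O₂ᵀ`. -/
theorem stmt2 (n K : ℕ) (hK : 0 < K) (hKn : K ≤ n)
    (A Astar : Matrix (Fin n) (Fin n) ℝ) (hA : A.IsSymm) (hAstar : Astar.IsSymm)
    (V Vstar : Matrix (Fin n) (Fin n) ℝ)
    (d dstar : Fin n → ℝ)
    (hV : Vᵀ * V = 1) (hVstar : Vstarᵀ * Vstar = 1)
    (hAdec : A = V * Matrix.diagonal d * Vᵀ)
    (hAstardec : Astar = Vstar * Matrix.diagonal dstar * Vstarᵀ)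
    (hd : ∀ i j : Fin n, i ≤ j → |d j| ≤ |d i|)
    (hdstar : ∀ i j : Fin n, i ≤ j → |dstar j| ≤ |dstar i|)
    (σK : ℝ) (hσKpos : 0 < σK)
    (hσK : ∀ k : Fin n, (k : ℕ) < K → σK ≤ |dstar k|)
    (hrank : ∀ k : Fin n, K ≤ (k : ℕ) → dstar k = 0)
    (γ : ℝ) (hγ : 0 < γ) (hgap : γ < σK)
    (hAA : specNorm (A - Astar) ≤ γ)
    (V₁ Vstar₁ : Matrix (Fin n) (Fin K) ℝ)
    (hV₁ : V₁ = Matrix.submatrix V id (Fin.castLE hKn))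
    (hVstar₁ : Vstar₁ = Matrix.submatrix Vstar id (Fin.castLE hKn))
    (O₁ O₂ Ωm : Matrix (Fin K) (Fin K) ℝ) (ωs : Fin K → ℝ) (hωs : ∀ k, 0 ≤ ωs k)
    (hO₁ : O₁ᵀ * O₁ = 1) (hO₂ : O₂ᵀ * O₂ = 1) (hΩm : Ωm = Matrix.diagonal ωs)
    (hSVD : V₁ᵀ * Vstar₁ = O₁ * Ωm * O₂ᵀ) :
    specNorm (V₁ * (O₁ * O₂ᵀ) - Vstar₁) ≤
      Real.sqrt 2 * specNorm ((A - Astar) * Vstar₁) / (σK - γ) := by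
  rw [specNorm_eq] at hAA ⊢
  rw [specNorm_eq]
  set J : Matrix (Fin n) (Fin K) ℝ := Jmat n K hKn with hJ
  have hJt : Jᵀ * J = 1 := Jmat_tmul hKn
  have hV₁J : V₁ = V * J := by rw [hV₁, hJ, mul_Jmat]
  have hVstar₁J : Vstar₁ = Vstar * J := by rw [hVstar₁, hJ, mul_Jmat]
  -- orthonormal columns
  have F1 : V₁ᵀ * V₁ = 1 := by
    rw [hV₁J, Matrix.transpose_mul, Matrix.mul_assoc, cancel_left V hV, hJt]
  have F1' : Vstar₁ᵀ * Vstar₁ = 1 := by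
    rw [hVstar₁J, Matrix.transpose_mul, Matrix.mul_assoc, cancel_left Vstar hVstar, hJt]
  set S : Matrix (Fin K) (Fin K) ℝ := Matrix.diagonal (dstar ∘ Fin.castLE hKn) with hS
  set D₁ : Matrix (Fin K) (Fin K) ℝ := Matrix.diagonal (d ∘ Fin.castLE hKn) with hD₁
  -- F2 : Astar * Vstar₁ = Vstar₁ * S
  have F2 : Astar * Vstar₁ = Vstar₁ * S := by
    rw [hAstardec, hVstar₁J]
    calc Vstar * Matrix.diagonal dstar * Vstarᵀ * (Vstar * J)
        = Vstar * (Matrix.diagonal dstar * (Vstarᵀ * (Vstar * J))) := by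
          simp only [Matrix.mul_assoc]
    _ = Vstar * (Matrix.diagonal dstar * J) := by rw [cancel_left Vstar hVstar]
    _ = Vstar * (J * S) := by rw [diag_mul_Jmat hKn dstar, hS]
    _ = Vstar * J * S := by rw [Matrix.mul_assoc]
  -- F4 : A * V₁ = V₁ * D₁
  have F4 : A * V₁ = V₁ * D₁ := by
    rw [hAdec, hV₁J]
    calc V * Matrix.diagonal d * Vᵀ * (V * J)
        = V * (Matrix.diagonal d * (Vᵀ * (V * J))) := by simp only [Matrix.mul_assoc]
    _ = V * (Matrix.diagonal d * J) := by rw [cancel_left V hV]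
    _ = V * (J * D₁) := by rw [diag_mul_Jmat hKn d, hD₁]
    _ = V * J * D₁ := by rw [Matrix.mul_assoc]
  -- F3 : V₁ᵀ * A = D₁ * V₁ᵀ
  have F3 : V₁ᵀ * A = D₁ * V₁ᵀ := by
    have h := congrArg Matrix.transpose F4
    rw [Matrix.transpose_mul, Matrix.transpose_mul, hA.eq, hD₁,
      Matrix.diagonal_transpose] at h
    rw [h, hD₁]
  set P : Matrix (Fin n) (Fin n) ℝ := V₁ * V₁ᵀ with hP
  have hPt : Pᵀ = P := by rw [hP, Matrix.transpose_mul, Matrix.transpose_transpose]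
  have hPP : P * P = P := by
    rw [hP, Matrix.mul_assoc, cancel_left V₁ F1]
  have hPA : P * A = A * P := by
    rw [hP, Matrix.mul_assoc, F3, ← Matrix.mul_assoc, ← F4, Matrix.mul_assoc]
  -- F5 : A - A * P = V * diagonal d' * Vᵀ
  set d' : Fin n → ℝ := fun i => if (i : ℕ) < K then 0 else d i with hd'
  have hJD : J * D₁ = Matrix.diagonal d * J := by
    rw [hJ, hD₁]; exact (diag_mul_Jmat hKn d).symm
  have hJJt : J * Jᵀ = Matrix.diagonal (fun i : Fin n =>
      if (i : ℕ) < K then (1:ℝ) else 0) := by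
    rw [hJ]; exact Jmat_mult hKn
  have F5 : A - A * P = V * Matrix.diagonal d' * Vᵀ := by
    have hAP : A * P = V * Matrix.diagonal (fun i : Fin n =>
        d i * (if (i : ℕ) < K then (1:ℝ) else 0)) * Vᵀ := by
      rw [hP, ← Matrix.mul_assoc, F4, hV₁J, Matrix.transpose_mul]
      calc V * J * D₁ * (Jᵀ * Vᵀ)
          = V * (J * D₁ * Jᵀ) * Vᵀ := by simp only [Matrix.mul_assoc]
      _ = V * (Matrix.diagonal d * J * Jᵀ) * Vᵀ := by rw [hJD]
      _ = V * (Matrix.diagonal d * (J * Jᵀ)) * Vᵀ := by simp only [Matrix.mul_assoc]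
      _ = V * (Matrix.diagonal d * Matrix.diagonal (fun i : Fin n =>
            if (i : ℕ) < K then (1:ℝ) else 0)) * Vᵀ := by rw [hJJt]
      _ = V * Matrix.diagonal (fun i : Fin n =>
            d i * (if (i : ℕ) < K then (1:ℝ) else 0)) * Vᵀ := by
          rw [Matrix.diagonal_mul_diagonal]
    have hdiag' : Matrix.diagonal d - Matrix.diagonal (fun i : Fin n =>
        d i * (if (i : ℕ) < K then (1:ℝ) else 0)) = Matrix.diagonal d' := by
      ext i j
      by_cases hij : i = j
      · subst hij
        simp only [Matrix.sub_apply, Matrix.diagonal_apply_eq, hd']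
        by_cases hi : (i : ℕ) < K
        · simp [hi]
        · simp [hi]
      · simp [Matrix.sub_apply, Matrix.diagonal_apply_ne _ hij]
    rw [hAP, hAdec, ← Matrix.sub_mul, ← Matrix.mul_sub, hdiag']
  -- Weyl bound
  have hwe : ∀ i : Fin n, |d' i| ≤ γ := by
    intro i
    by_cases hi : (i : ℕ) < K
    · simp [hd', hi, hγ.le]
    · simp only [hd', if_neg hi]
      exact weyl n K hKn A Astar V Vstar d dstar hV hVstar hAdec hAstardec hd hrank
        γ hγ.le hAA i (le_of_not_gt hi)
  have F7 : ‖A - A * P‖ ≤ γ := by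
    rw [F5, norm_mul_orth _ V hV, norm_orth_mul V hV]
    exact norm_diagonal_le d' γ hγ.le hwe
  -- the residual
  set R : Matrix (Fin n) (Fin K) ℝ := (A - Astar) * Vstar₁ with hR
  set G : Matrix (Fin K) (Fin K) ℝ := V₁ᵀ * Vstar₁ with hG
  set W : Matrix (Fin n) (Fin K) ℝ := Vstar₁ - V₁ * G with hW
  have G1 : W = (1 - P) * Vstar₁ := by
    rw [hW, Matrix.sub_mul, Matrix.one_mul, hG, hP, Matrix.mul_assoc]
  have G2 : ((1 : Matrix (Fin n) (Fin n) ℝ) - P) * (1 - P) = 1 - P := by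
    simp only [Matrix.sub_mul, Matrix.mul_sub, Matrix.one_mul, Matrix.mul_one, hPP]
    abel
  have G3 : ((1 : Matrix (Fin n) (Fin n) ℝ) - P) * A = A * (1 - P) := by
    rw [Matrix.sub_mul, Matrix.mul_sub, Matrix.one_mul, Matrix.mul_one, hPA]
  -- key identity
  have F8 : W * S = (A - A * P) * W - (1 - P) * R := by
    have e1 : W * S = (1 - P) * (Astar * Vstar₁) := by
      rw [G1, Matrix.mul_assoc, F2]
    have e2 : Astar * Vstar₁ = A * Vstar₁ - R := by
      rw [hR, Matrix.sub_mul]; abel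
    have e3 : (A - A * P) * W = (1 - P) * (A * Vstar₁) := by
      have hA1P : A - A * P = A * (1 - P) := by
        rw [Matrix.mul_sub, Matrix.mul_one]
      rw [hA1P, G1, ← Matrix.mul_assoc, Matrix.mul_assoc A (1-P) (1-P), G2,
        ← G3, Matrix.mul_assoc]
    rw [e1, e2, Matrix.mul_sub, e3]
  -- norm chain
  have hprojnorm : ‖(1 : Matrix (Fin n) (Fin n) ℝ) - P‖ ≤ 1 := by
    have hNt : ((1 : Matrix (Fin n) (Fin n) ℝ) - P)ᵀ = 1 - P := by
      rw [Matrix.transpose_sub, Matrix.transpose_one, hPt]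
    have h := norm_tmul ((1 : Matrix (Fin n) (Fin n) ℝ) - P)
    rw [hNt, G2] at h
    exact idem_norm_le_one (norm_nonneg _) h.symm
  have hWSl : σK * ‖W‖ ≤ ‖W * S‖ := by
    set Sinv : Matrix (Fin K) (Fin K) ℝ :=
      Matrix.diagonal (fun k => (dstar (Fin.castLE hKn k))⁻¹) with hSinv
    have hdsne : ∀ k : Fin K, dstar (Fin.castLE hKn k) ≠ 0 := by
      intro k
      have h1 := hσK (Fin.castLE hKn k) (by simpa using k.isLt)
      intro hc; rw [hc] at h1; simp at h1; linarith
    have hSS : S * Sinv = 1 := by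
      rw [hS, hSinv, Matrix.diagonal_mul_diagonal]
      have h : (fun k : Fin K => (dstar ∘ Fin.castLE hKn) k * (dstar (Fin.castLE hKn k))⁻¹)
          = fun _ => 1 := by
        funext k; exact mul_inv_cancel₀ (hdsne k)
      rw [h, Matrix.diagonal_one]
    have hSinvnorm : ‖Sinv‖ ≤ σK⁻¹ := by
      apply norm_diagonal_le _ _ (by positivity)
      intro k
      rw [abs_inv]
      apply inv_anti₀ hσKpos
      exact hσK (Fin.castLE hKn k) (by simpa using k.isLt)
    have h1 : ‖W‖ ≤ ‖W * S‖ * σK⁻¹ := by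
      calc ‖W‖ = ‖W * S * Sinv‖ := by
            rw [Matrix.mul_assoc, hSS, Matrix.mul_one]
      _ ≤ ‖W * S‖ * ‖Sinv‖ := Matrix.l2_opNorm_mul _ _
      _ ≤ ‖W * S‖ * σK⁻¹ := by
          apply mul_le_mul_of_nonneg_left hSinvnorm (norm_nonneg _)
    calc σK * ‖W‖ ≤ σK * (‖W * S‖ * σK⁻¹) := by
          apply mul_le_mul_of_nonneg_left h1 hσKpos.le
    _ = ‖W * S‖ := by field_simp
  have hWSu : ‖W * S‖ ≤ γ * ‖W‖ + ‖R‖ := by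
    rw [F8]
    calc ‖(A - A * P) * W - (1 - P) * R‖
        ≤ ‖(A - A * P) * W‖ + ‖(1 - P) * R‖ := norm_sub_le _ _
    _ ≤ γ * ‖W‖ + ‖R‖ := by
        apply add_le_add
        · calc ‖(A - A * P) * W‖ ≤ ‖A - A * P‖ * ‖W‖ := Matrix.l2_opNorm_mul _ _
          _ ≤ γ * ‖W‖ := mul_le_mul_of_nonneg_right F7 (norm_nonneg _)
        · calc ‖(1 - P) * R‖ ≤ ‖(1 : Matrix (Fin n) (Fin n) ℝ) - P‖ * ‖R‖ :=
              Matrix.l2_opNorm_mul _ _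
          _ ≤ 1 * ‖R‖ := mul_le_mul_of_nonneg_right hprojnorm (norm_nonneg _)
          _ = ‖R‖ := one_mul _
  have hWbound : (σK - γ) * ‖W‖ ≤ ‖R‖ := gap_helper (le_trans hWSl hWSu)
  -- Part 2: optimal rotation
  have hO₂c : O₂ * O₂ᵀ = 1 := mul_eq_one_comm.mp hO₂
  have hΩt : Ωmᵀ = Ωm := by rw [hΩm, Matrix.diagonal_transpose]
  set T : Matrix (Fin n) (Fin K) ℝ := V₁ * (O₁ * O₂ᵀ) - Vstar₁ with hT
  have hGO : V₁ᵀ * Vstar₁ = O₁ * (Ωm * O₂ᵀ) := by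
    rw [← hG, hSVD, Matrix.mul_assoc]
  have hGOt : Vstar₁ᵀ * V₁ = O₂ * (Ωm * O₁ᵀ) := by
    have h := congrArg Matrix.transpose hGO
    rw [Matrix.transpose_mul, Matrix.transpose_transpose, Matrix.transpose_mul,
      Matrix.transpose_mul, Matrix.transpose_transpose, hΩt] at h
    rw [h, Matrix.mul_assoc]
  have ht1 : (V₁ * (O₁ * O₂ᵀ))ᵀ * (V₁ * (O₁ * O₂ᵀ)) = 1 := by
    rw [Matrix.transpose_mul, Matrix.mul_assoc, cancel_left V₁ F1,
      Matrix.transpose_mul, Matrix.transpose_transpose, Matrix.mul_assoc,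
      cancel_left O₁ hO₁, hO₂c]
  have ht2 : (V₁ * (O₁ * O₂ᵀ))ᵀ * Vstar₁ = O₂ * (Ωm * O₂ᵀ) := by
    rw [Matrix.transpose_mul, Matrix.transpose_mul, Matrix.transpose_transpose,
      Matrix.mul_assoc, Matrix.mul_assoc, hGO, cancel_left O₁ hO₁]
  have ht3 : Vstar₁ᵀ * (V₁ * (O₁ * O₂ᵀ)) = O₂ * (Ωm * O₂ᵀ) := by
    rw [← Matrix.mul_assoc, hGOt]
    simp only [Matrix.mul_assoc]
    rw [cancel_left O₁ hO₁]
  have hdiag2 : Matrix.diagonal (fun k : Fin K => 2 - 2 * ωs k)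
      = (2:ℝ) • (1 : Matrix (Fin K) (Fin K) ℝ) - (2:ℝ) • Ωm := by
    rw [hΩm]
    ext i j
    by_cases hij : i = j
    · subst hij
      simp [Matrix.diagonal_apply_eq, Matrix.one_apply_eq, Matrix.sub_apply]
    · simp [Matrix.diagonal_apply_ne _ hij, Matrix.one_apply_ne hij,
        Matrix.sub_apply]
  have key1 : Tᵀ * T = O₂ * Matrix.diagonal (fun k : Fin K => 2 - 2 * ωs k) * O₂ᵀ := by
    have expand : Tᵀ * T = 1 - O₂ * (Ωm * O₂ᵀ) - O₂ * (Ωm * O₂ᵀ) + 1 := by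
      rw [hT, Matrix.transpose_sub, Matrix.sub_mul, Matrix.mul_sub, Matrix.mul_sub,
        ht1, ht2, ht3, F1']
      abel
    rw [expand, hdiag2, Matrix.mul_sub, Matrix.sub_mul]
    simp only [Matrix.mul_smul, Matrix.smul_mul, Matrix.mul_one]
    rw [hO₂c]
    simp only [Matrix.mul_assoc]
    rw [two_smul, two_smul]
    abel
  have hdiag3 : Matrix.diagonal (fun k : Fin K => 1 - ωs k * ωs k)
      = (1 : Matrix (Fin K) (Fin K) ℝ) - Ωm * Ωm := by
    rw [hΩm, Matrix.diagonal_mul_diagonal]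
    ext i j
    by_cases hij : i = j
    · subst hij
      simp [Matrix.diagonal_apply_eq, Matrix.one_apply_eq, Matrix.sub_apply]
    · simp [Matrix.diagonal_apply_ne _ hij, Matrix.one_apply_ne hij,
        Matrix.sub_apply]
  have hWW : Wᵀ * W = O₂ * Matrix.diagonal (fun k : Fin K => 1 - ωs k * ωs k) * O₂ᵀ := by
    have u1 : Vstar₁ᵀ * (V₁ * G) = O₂ * (Ωm * (Ωm * O₂ᵀ)) := by
      rw [← Matrix.mul_assoc, hGOt, hSVD]
      simp only [Matrix.mul_assoc]
      rw [cancel_left O₁ hO₁]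
    have u2 : (V₁ * G)ᵀ * Vstar₁ = O₂ * (Ωm * (Ωm * O₂ᵀ)) := by
      rw [Matrix.transpose_mul, Matrix.mul_assoc, hGO, hSVD, Matrix.transpose_mul,
        Matrix.transpose_mul, Matrix.transpose_transpose, hΩt]
      simp only [Matrix.mul_assoc]
      rw [cancel_left O₁ hO₁]
    have u3 : (V₁ * G)ᵀ * (V₁ * G) = O₂ * (Ωm * (Ωm * O₂ᵀ)) := by
      rw [Matrix.transpose_mul, Matrix.mul_assoc, cancel_left V₁ F1, hSVD,
        Matrix.transpose_mul, Matrix.transpose_mul, Matrix.transpose_transpose, hΩt]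
      simp only [Matrix.mul_assoc]
      rw [cancel_left O₁ hO₁]
    have hWexp : Wᵀ * W = 1 - O₂ * (Ωm * (Ωm * O₂ᵀ)) := by
      rw [hW, Matrix.transpose_sub, Matrix.sub_mul, Matrix.mul_sub, Matrix.mul_sub,
        F1', u1, u2, u3]
      abel
    rw [hWexp, hdiag3, Matrix.mul_sub, Matrix.sub_mul, Matrix.mul_one, hO₂c]
    simp only [Matrix.mul_assoc]
  -- ωs k ≤ 1
  have hGle : ‖G‖ ≤ 1 := by
    calc ‖G‖ ≤ ‖V₁ᵀ‖ * ‖Vstar₁‖ := by rw [hG]; exact Matrix.l2_opNorm_mul _ _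
    _ ≤ 1 * 1 := by
        apply mul_le_mul _ (norm_le_one_of_orth Vstar₁ F1') (norm_nonneg _) zero_le_one
        rw [norm_transpose]; exact norm_le_one_of_orth V₁ F1
    _ = 1 := one_mul _
  have hΩnorm : ‖Ωm‖ ≤ 1 := by
    have h : G = O₁ * (Ωm * O₂ᵀ) := by rw [hSVD, Matrix.mul_assoc]
    have h2 : ‖G‖ = ‖Ωm‖ := by
      rw [h, norm_orth_mul O₁ hO₁, norm_mul_orth Ωm O₂ hO₂]
    rw [← h2]; exact hGle
  have hω1 : ∀ k, ωs k ≤ 1 := by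
    intro k
    calc ωs k = |ωs k| := (abs_of_nonneg (hωs k)).symm
    _ ≤ ‖Matrix.diagonal ωs‖ := abs_le_norm_diagonal ωs k
    _ = ‖Ωm‖ := by rw [hΩm]
    _ ≤ 1 := hΩnorm
  -- norms
  have hTnorm : ‖T‖ * ‖T‖ = ‖Matrix.diagonal (fun k : Fin K => 2 - 2 * ωs k)‖ := by
    rw [← norm_tmul T, key1, norm_mul_orth _ O₂ hO₂, norm_orth_mul O₂ hO₂]
  have hWnorm : ‖W‖ * ‖W‖ = ‖Matrix.diagonal (fun k : Fin K => 1 - ωs k * ωs k)‖ := by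
    rw [← norm_tmul W, hWW, norm_mul_orth _ O₂ hO₂, norm_orth_mul O₂ hO₂]
  have hTW : ‖T‖ * ‖T‖ ≤ 2 * (‖W‖ * ‖W‖) := by
    rw [hTnorm, hWnorm]
    apply norm_diagonal_le _ _ (by positivity)
    intro k
    have h2 := abs_le_norm_diagonal (fun k : Fin K => 1 - ωs k * ωs k) k
    have h3 : |1 - ωs k * ωs k| = 1 - ωs k * ωs k := by
      apply abs_of_nonneg
      nlinarith [hωs k, hω1 k]
    rw [h3] at h2
    have h4 : |2 - 2 * ωs k| = 2 - 2 * ωs k := by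
      apply abs_of_nonneg; linarith [hω1 k]
    rw [h4]
    nlinarith [hωs k, hω1 k]
  -- conclusion
  have hTfin : ‖T‖ ≤ Real.sqrt 2 * ‖W‖ := by
    calc ‖T‖ = Real.sqrt (‖T‖ * ‖T‖) := (Real.sqrt_mul_self (norm_nonneg _)).symm
    _ ≤ Real.sqrt (2 * (‖W‖ * ‖W‖)) := Real.sqrt_le_sqrt hTW
    _ = Real.sqrt 2 * Real.sqrt (‖W‖ * ‖W‖) := Real.sqrt_mul (by norm_num) _
    _ = Real.sqrt 2 * ‖W‖ := by rw [Real.sqrt_mul_self (norm_nonneg _)]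
  have hgap' : 0 < σK - γ := by linarith
  have hWfin : ‖W‖ ≤ ‖R‖ / (σK - γ) := by
    rw [le_div_iff₀ hgap']
    calc ‖W‖ * (σK - γ) = (σK - γ) * ‖W‖ := mul_comm _ _
    _ ≤ ‖R‖ := hWbound
  calc ‖T‖ ≤ Real.sqrt 2 * ‖W‖ := hTfin
  _ ≤ Real.sqrt 2 * (‖R‖ / (σK - γ)) :=
      mul_le_mul_of_nonneg_left hWfin (Real.sqrt_nonneg 2)
  _ = Real.sqrt 2 * ‖R‖ / (σK - γ) := by rw [mul_div_assoc]
end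

section
/- In a degree-corrected SBM with regularized population Laplacian 𝓛 = n⁻¹ Θ_τ^{1/2} Z B₀ Zᵀ Θ_τ^{1/2} (where Θ_τ = diag(θᵢ dᵢ/(dᵢ+τ))), let U₁ denote the n×K matrix of eigenvectors of 𝓛 associated with its K nonzero eigenvalues, and uᵢᵀ its i-th row. Then: (1) U₁ = Θ_τ^{1/2} Z (Zᵀ Θ_τ Z)^{-1/2} Sₙ for some orthogonal K×K matrix Sₙ; (2) (n^τ_{g_i})^{1/2} (θᵢ^τ)^{-1/2} ‖uᵢ‖ = 1 where n^τ_k = Σ_{i∈C_k} θᵢ^τ; (3) if nodes i, j are in the same community then uᵢ/‖uᵢ‖ = u_j/‖u_j‖, and if they are in different communities then ‖uᵢ/‖uᵢ‖ − u_j/‖u_j‖‖ = √2. -/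
open scoped BigOperators Matrix

/-- Euclidean norm of a vector in `ℝ^K`. -/
noncomputable def eucNorm {K : ℕ} (v : Fin K → ℝ) : ℝ :=
  Real.sqrt (∑ k, (v k) ^ 2)

/-- Structure of the eigenvectors of the regularized population
Laplacian of a degree-corrected SBM. -/
theorem stmt4 (n K : ℕ) (hn : 0 < n) (hK : 0 < K)
    (g : Fin n → Fin K)
    (Z : Matrix (Fin n) (Fin K) ℝ) (hZ : ∀ i k, Z i k = if g i = k then 1 else 0)
    (θτ : Fin n → ℝ) (hθτ : ∀ i, 0 < θτ i)
    (nτ : Fin K → ℝ) (hnτ : ∀ k, nτ k = ∑ i, if g i = k then θτ i else 0)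
    (B₀ : Matrix (Fin K) (Fin K) ℝ) (hB₀symm : B₀.IsSymm) (hrank : B₀.rank = K)
    (L : Matrix (Fin n) (Fin n) ℝ)
    (hL : L = (n : ℝ)⁻¹ • ((Matrix.diagonal fun i => Real.sqrt (θτ i)) * Z * B₀ * Zᵀ *
        (Matrix.diagonal fun i => Real.sqrt (θτ i))))
    (U₁ : Matrix (Fin n) (Fin K) ℝ) (σ : Fin K → ℝ) (hσ : ∀ k, σ k ≠ 0)
    (hU₁orth : U₁ᵀ * U₁ = 1)
    (heig : L * U₁ = U₁ * Matrix.diagonal σ) :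
    (∃ S : Matrix (Fin K) (Fin K) ℝ, Sᵀ * S = 1 ∧
        U₁ = (Matrix.diagonal fun i => Real.sqrt (θτ i)) * Z *
          (Matrix.diagonal fun k => (Real.sqrt (nτ k))⁻¹) * S) ∧
    (∀ i, Real.sqrt (nτ (g i)) * (Real.sqrt (θτ i))⁻¹ * eucNorm (U₁ i) = 1) ∧
    (∀ i j, g i = g j →
        (eucNorm (U₁ i))⁻¹ • U₁ i = (eucNorm (U₁ j))⁻¹ • U₁ j) ∧
    (∀ i j, g i ≠ g j →
        eucNorm ((eucNorm (U₁ i))⁻¹ • U₁ i - (eucNorm (U₁ j))⁻¹ • U₁ j) = Real.sqrt 2) := by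
  set Θh : Matrix (Fin n) (Fin n) ℝ := Matrix.diagonal fun i => Real.sqrt (θτ i) with hΘh
  -- Z transpose * diagonal θτ * Z = diagonal nτ
  have hZΘZ : Zᵀ * Matrix.diagonal θτ * Z = Matrix.diagonal nτ := by
    ext k l
    rw [Matrix.mul_assoc, Matrix.mul_apply]
    simp only [Matrix.transpose_apply, Matrix.diagonal_mul, hZ]
    rcases eq_or_ne k l with rfl | hkl
    · rw [Matrix.diagonal_apply_eq, hnτ]
      apply Finset.sum_congr rfl
      intro i _
      by_cases h : g i = k <;> simp [h]
    · rw [Matrix.diagonal_apply_ne _ hkl]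
      apply Finset.sum_eq_zero
      intro i _
      by_cases h1 : g i = k
      · have h2 : g i ≠ l := h1 ▸ hkl
        simp [h1, hkl]
      · simp [h1]
  have hΘhΘh : Θh * Θh = Matrix.diagonal θτ := by
    rw [hΘh, Matrix.diagonal_mul_diagonal]
    exact congrArg Matrix.diagonal (funext fun i => Real.mul_self_sqrt (hθτ i).le)
  -- U₁ = Θh * Z * W
  set W : Matrix (Fin K) (Fin K) ℝ :=
    ((n : ℝ)⁻¹ • B₀) * Zᵀ * Θh * U₁ * Matrix.diagonal (fun k => (σ k)⁻¹) with hW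
  have hσinv : Matrix.diagonal σ * Matrix.diagonal (fun k => (σ k)⁻¹) = 1 := by
    rw [Matrix.diagonal_mul_diagonal,
      show (fun k => σ k * (σ k)⁻¹) = fun _ : Fin K => (1:ℝ) from
        funext fun k => mul_inv_cancel₀ (hσ k)]
    exact Matrix.diagonal_one
  have hU : U₁ = Θh * Z * W := by
    have h1 : U₁ = U₁ * Matrix.diagonal σ * Matrix.diagonal (fun k => (σ k)⁻¹) := by
      rw [Matrix.mul_assoc, hσinv, Matrix.mul_one]
    rw [h1, ← heig, hL, hW]
    simp only [Matrix.smul_mul, Matrix.mul_smul]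
    ring_nf
    simp only [Matrix.mul_assoc]
  -- orthonormality: Wᵀ * diagonal nτ * W = 1
  have hΘhT : Θhᵀ = Θh := by rw [hΘh]; exact Matrix.diagonal_transpose _
  have hWn : Wᵀ * Matrix.diagonal nτ * W = 1 := by
    have h := hU₁orth
    rw [hU] at h
    rw [← hZΘZ, ← hΘhΘh]
    simp only [Matrix.transpose_mul, hΘhT, Matrix.mul_assoc] at h ⊢
    exact h
  -- positivity of nτ
  have hnτ_nonneg : ∀ k, 0 ≤ nτ k := by
    intro k
    rw [hnτ]
    apply Finset.sum_nonneg
    intro i _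
    by_cases h : g i = k <;> simp [h, (hθτ i).le]
  have hnτ_pos : ∀ k, 0 < nτ k := by
    have hcomm : Matrix.diagonal nτ * W * Wᵀ = 1 := by
      rw [mul_eq_one_comm.mp]
      rw [← Matrix.mul_assoc]
      exact hWn
    have hdet : (Matrix.diagonal nτ).det ≠ 0 := by
      intro h0
      have := congrArg Matrix.det hcomm
      rw [Matrix.det_mul, Matrix.det_mul, h0, Matrix.det_one] at this
      simp at this
    rw [Matrix.det_diagonal] at hdet
    intro k
    rcases lt_or_eq_of_le (hnτ_nonneg k) with h | h
    · exact h
    · exact absurd (Finset.prod_eq_zero (Finset.mem_univ k) h.symm) hdet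
  have hsqrt_nτ_pos : ∀ k, 0 < Real.sqrt (nτ k) := fun k => Real.sqrt_pos.mpr (hnτ_pos k)
  -- define S
  set Dh : Matrix (Fin K) (Fin K) ℝ := Matrix.diagonal fun k => Real.sqrt (nτ k) with hDh
  set Dinv : Matrix (Fin K) (Fin K) ℝ := Matrix.diagonal fun k => (Real.sqrt (nτ k))⁻¹ with hDinv
  set S : Matrix (Fin K) (Fin K) ℝ := Dh * W with hS
  have hDinvDh : Dinv * Dh = 1 := by
    rw [hDinv, hDh, Matrix.diagonal_mul_diagonal,
      show (fun k => (Real.sqrt (nτ k))⁻¹ * Real.sqrt (nτ k)) = fun _ : Fin K => (1:ℝ) from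
        funext fun k => inv_mul_cancel₀ (hsqrt_nτ_pos k).ne']
    exact Matrix.diagonal_one
  have hDhDh : Dh * Dh = Matrix.diagonal nτ := by
    rw [hDh, Matrix.diagonal_mul_diagonal]
    exact congrArg Matrix.diagonal (funext fun k => Real.mul_self_sqrt (hnτ_nonneg k))
  have hSorth : Sᵀ * S = 1 := by
    rw [hS, Matrix.transpose_mul]
    have hDhs : Dhᵀ = Dh := Matrix.diagonal_transpose _
    rw [hDhs]
    calc Wᵀ * Dh * (Dh * W) = Wᵀ * (Dh * Dh) * W := by simp only [Matrix.mul_assoc]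
      _ = 1 := by rw [hDhDh]; exact hWn
  have hU₁S : U₁ = Θh * Z * Dinv * S := by
    rw [hS]
    calc U₁ = Θh * Z * W := hU
      _ = Θh * Z * (Dinv * Dh) * W := by rw [hDinvDh, Matrix.mul_one]
      _ = Θh * Z * Dinv * (Dh * W) := by simp only [Matrix.mul_assoc]
  -- rows of S orthonormal
  have hSST : S * Sᵀ = 1 := mul_eq_one_comm.mp hSorth
  have hrow_self : ∀ k, ∑ m, (S k m) ^ 2 = 1 := by
    intro k
    have := congrFun (congrFun hSST k) k
    simp only [Matrix.mul_apply, Matrix.transpose_apply, Matrix.one_apply_eq] at this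
    rw [← this]
    apply Finset.sum_congr rfl
    intro m _
    ring
  have hrow_orth : ∀ k l, k ≠ l → ∑ m, S k m * S l m = 0 := by
    intro k l hkl
    have := congrFun (congrFun hSST k) l
    simp only [Matrix.mul_apply, Matrix.transpose_apply] at this
    rwa [Matrix.one_apply_ne hkl] at this
  -- row structure of U₁
  set c : Fin n → ℝ := fun i => Real.sqrt (θτ i) * (Real.sqrt (nτ (g i)))⁻¹ with hc
  have hc_pos : ∀ i, 0 < c i := fun i =>
    mul_pos (Real.sqrt_pos.mpr (hθτ i)) (inv_pos.mpr (hsqrt_nτ_pos (g i)))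
  have hrowU : ∀ i m, U₁ i m = c i * S (g i) m := by
    intro i m
    rw [hU₁S]
    have : (Θh * Z * Dinv * S) i m = ∑ l, (Θh * Z * Dinv) i l * S l m := by
      rw [Matrix.mul_apply]
    rw [this]
    have hEntry : ∀ l, (Θh * Z * Dinv) i l
        = if g i = l then Real.sqrt (θτ i) * (Real.sqrt (nτ l))⁻¹ else 0 := by
      intro l
      rw [hΘh, hDinv, Matrix.mul_diagonal, Matrix.diagonal_mul, hZ]
      by_cases h : g i = l <;> simp [h]
    rw [Finset.sum_congr rfl (fun l _ => by rw [hEntry l])]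
    simp only [ite_mul, zero_mul]
    rw [Finset.sum_ite_eq]
    simp [hc]
  have hnormU : ∀ i, eucNorm (U₁ i) = c i := by
    intro i
    unfold eucNorm
    have : ∑ k, (U₁ i k) ^ 2 = (c i)^2 * ∑ k, (S (g i) k)^2 := by
      rw [Finset.mul_sum]
      apply Finset.sum_congr rfl
      intro k _
      rw [hrowU i k]; ring
    rw [this, hrow_self, mul_one, Real.sqrt_sq (hc_pos i).le]
  have hnormalized : ∀ i, (eucNorm (U₁ i))⁻¹ • U₁ i = S (g i) := by
    intro i
    funext k
    simp only [Pi.smul_apply, smul_eq_mul, hnormU i, hrowU i k]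
    rw [← mul_assoc, inv_mul_cancel₀ (hc_pos i).ne', one_mul]
  refine ⟨⟨S, hSorth, hU₁S⟩, ?_, ?_, ?_⟩
  · intro i
    rw [hnormU i]
    simp only [hc]
    rw [mul_assoc, ← mul_assoc (Real.sqrt (θτ i))⁻¹, inv_mul_cancel₀
      (Real.sqrt_pos.mpr (hθτ i)).ne', one_mul,
      mul_inv_cancel₀ (hsqrt_nτ_pos (g i)).ne']
  · intro i j hij
    rw [hnormalized i, hnormalized j, hij]
  · intro i j hij
    rw [hnormalized i, hnormalized j]
    unfold eucNorm
    have : ∑ k, ((S (g i) - S (g j)) k) ^ 2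
        = ∑ k, (S (g i) k)^2 + ∑ k, (S (g j) k)^2 - 2 * ∑ k, S (g i) k * S (g j) k := by
      rw [← Finset.sum_add_distrib, Finset.mul_sum, ← Finset.sum_sub_distrib]
      apply Finset.sum_congr rfl
      intro k _
      simp only [Pi.sub_apply]
      ring
    rw [this, hrow_self, hrow_self, hrow_orth _ _ hij]
    norm_num
end

section
/- (K-means centroid consistency.) Suppose β₁,…,β_K ∈ ℝ^K with ‖β_k‖ ≤ M, points β̂₁,…,β̂ₙ with true labels g_i satisfying sup_i ‖β̂ᵢ − β_{gᵢ}‖ ≤ c₂ ≤ M, min_{k≠k'} ‖β_k − β_{k'}‖ ≥ c₁ > 0, community proportions π_k = |{i: gᵢ=k}|/n satisfying c/K ≤ π_k, and (2c₂√c + 16K^{3/4}M^{1/2}c₂^{1/2})² ≤ c·c₁². Let be a minimizer over K-point sets 𝒜 = {α₁,…,α_K} of Q̂(𝒜) = n⁻¹Σᵢ min_l ‖β̂ᵢ − α_l‖². Then the Hausdorff distance between and {β₁,…,β_K} is at most (15M/c)^{1/2} c₂^{1/2} K^{3/4}. -/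
set_option maxHeartbeats 1000000


open scoped BigOperators

/-- The K-means objective `Q̂(α) = n⁻¹ Σᵢ min_l ‖β̂ᵢ − α_l‖²`. -/
noncomputable def kmeansObj {n K : ℕ} (hK : 0 < K)
    (βhat : Fin n → EuclideanSpace ℝ (Fin K))
    (α : Fin K → EuclideanSpace ℝ (Fin K)) : ℝ :=
  (n : ℝ)⁻¹ * ∑ i, Finset.univ.inf' (Finset.univ_nonempty_iff.mpr ⟨⟨0, hK⟩⟩)
    (fun l => ‖βhat i - α l‖ ^ 2)

/-- K-means centroid consistency: the minimizing centroid set is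
within Hausdorff distance `(15M/c)^{1/2} c₂^{1/2} K^{3/4}` of the true centroids. -/
theorem stmt5 (n K : ℕ) (hn : 0 < n) (hK2 : 2 ≤ K) (hK : 0 < K)
    (M c c₁ c₂ : ℝ) (hM : 0 < M) (hc : 0 < c) (hc1 : c ≤ 1)
    (hc₁ : 0 < c₁) (hc₂ : 0 < c₂)
    (β : Fin K → EuclideanSpace ℝ (Fin K)) (βhat : Fin n → EuclideanSpace ℝ (Fin K))
    (g : Fin n → Fin K)
    (hβM : ∀ k, ‖β k‖ ≤ M)
    (hclose : ∀ i, ‖βhat i - β (g i)‖ ≤ c₂) (hc₂M : c₂ ≤ M)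
    (hsep : ∀ k k', k ≠ k' → c₁ ≤ ‖β k - β k'‖)
    (hπ : ∀ k, c / K ≤ ((Finset.univ.filter fun i => g i = k).card : ℝ) / n)
    (hcond : (2 * c₂ * Real.sqrt c +
        16 * (K : ℝ) ^ ((3 : ℝ) / 4) * Real.sqrt M * Real.sqrt c₂) ^ 2 ≤ c * c₁ ^ 2)
    (αhat : Fin K → EuclideanSpace ℝ (Fin K))
    (hmin : ∀ α : Fin K → EuclideanSpace ℝ (Fin K),
      kmeansObj hK βhat αhat ≤ kmeansObj hK βhat α) :
    Metric.hausdorffDist (Set.range αhat) (Set.range β) ≤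
      Real.sqrt (15 * M / c) * Real.sqrt c₂ * (K : ℝ) ^ ((3 : ℝ) / 4) := by
  have hn' : (0:ℝ) < n := by exact_mod_cast hn
  have hK' : (1:ℝ) ≤ (K:ℝ) := by exact_mod_cast hK
  have hK'' : (0:ℝ) < (K:ℝ) := by exact_mod_cast hK
  set r : ℝ := Real.sqrt (15 * M / c) * Real.sqrt c₂ * (K : ℝ) ^ ((3 : ℝ) / 4) with hrdef
  have hsM : 0 < Real.sqrt M := Real.sqrt_pos.mpr hM
  have hsc : 0 < Real.sqrt c := Real.sqrt_pos.mpr hc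
  have hsc2 : 0 < Real.sqrt c₂ := Real.sqrt_pos.mpr hc₂
  have hscle1 : Real.sqrt c ≤ 1 := by
    rw [show (1:ℝ) = Real.sqrt 1 by simp]
    exact Real.sqrt_le_sqrt hc1
  have hKr1 : (1:ℝ) ≤ (K:ℝ) ^ ((3:ℝ)/4) := Real.one_le_rpow hK' (by norm_num)
  have hKrpos : (0:ℝ) < (K:ℝ) ^ ((3:ℝ)/4) := lt_of_lt_of_le one_pos hKr1
  set A : ℝ := Real.sqrt M / Real.sqrt c * Real.sqrt c₂ * (K : ℝ) ^ ((3:ℝ)/4) with hAdef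
  have hApos : 0 < A := by positivity
  have h15 : (Real.sqrt 15)^2 = 15 := Real.sq_sqrt (by norm_num)
  have h15nn : 0 ≤ Real.sqrt 15 := Real.sqrt_nonneg 15
  have h15l : (3:ℝ) ≤ Real.sqrt 15 := by nlinarith
  have h15u : Real.sqrt 15 < 4 := by nlinarith
  have hrA : r = Real.sqrt 15 * A := by
    rw [hrdef, hAdef, show (15 : ℝ) * M / c = 15 * M / c from rfl,
      Real.sqrt_div (by positivity : (0:ℝ) ≤ 15 * M),
      Real.sqrt_mul (by norm_num : (0:ℝ) ≤ 15)]
    ring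
  have hrpos : 0 < r := by rw [hrA]; nlinarith
  -- c₂ ≤ A
  have hsc2M : Real.sqrt c₂ ≤ Real.sqrt M := Real.sqrt_le_sqrt hc₂M
  have hc₂eq : c₂ = Real.sqrt c₂ * Real.sqrt c₂ := (Real.mul_self_sqrt hc₂.le).symm
  have hMdiv : Real.sqrt M ≤ Real.sqrt M / Real.sqrt c := by
    rw [le_div_iff₀ hsc]; nlinarith
  have hc₂A : c₂ ≤ A := by
    rw [hAdef]
    calc c₂ = Real.sqrt c₂ * Real.sqrt c₂ := hc₂eq
      _ ≤ (Real.sqrt M / Real.sqrt c) * Real.sqrt c₂ :=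
          mul_le_mul_of_nonneg_right (hsc2M.trans hMdiv) hsc2.le
      _ ≤ (Real.sqrt M / Real.sqrt c) * Real.sqrt c₂ * (K:ℝ) ^ ((3:ℝ)/4) :=
          le_mul_of_one_le_right (by positivity) hKr1
  -- c₂ √K / √c ≤ A
  have hsqK : Real.sqrt (K:ℝ) ≤ (K:ℝ) ^ ((3:ℝ)/4) := by
    rw [Real.sqrt_eq_rpow]
    exact Real.rpow_le_rpow_of_exponent_le hK' (by norm_num)
  have hsqKnn : 0 ≤ Real.sqrt (K:ℝ) := Real.sqrt_nonneg _
  have hB : c₂ * Real.sqrt (K:ℝ) / Real.sqrt c ≤ A := by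
    rw [hAdef, div_le_iff₀ hsc, div_mul_eq_mul_div, div_mul_eq_mul_div,
      div_mul_cancel₀ _ (ne_of_gt hsc)]
    have h1 : Real.sqrt c₂ * Real.sqrt (K:ℝ) ≤ Real.sqrt M * (K:ℝ) ^ ((3:ℝ)/4) :=
      mul_le_mul hsc2M hsqK hsqKnn hsM.le
    calc c₂ * Real.sqrt (K:ℝ)
        = Real.sqrt c₂ * (Real.sqrt c₂ * Real.sqrt (K:ℝ)) := by
          rw [← mul_assoc, ← hc₂eq]
      _ ≤ Real.sqrt c₂ * (Real.sqrt M * (K:ℝ) ^ ((3:ℝ)/4)) :=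
          mul_le_mul_of_nonneg_left h1 hsc2.le
      _ = Real.sqrt M * Real.sqrt c₂ * (K:ℝ) ^ ((3:ℝ)/4) := by ring
  -- A ≤ c₁ / 16
  have hAc₁ : 16 * A ≤ c₁ := by
    have hLnn : 0 ≤ 2 * c₂ * Real.sqrt c +
        16 * (K : ℝ) ^ ((3 : ℝ) / 4) * Real.sqrt M * Real.sqrt c₂ := by positivity
    have h1 : 2 * c₂ * Real.sqrt c +
        16 * (K : ℝ) ^ ((3 : ℝ) / 4) * Real.sqrt M * Real.sqrt c₂ ≤ Real.sqrt c * c₁ := by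
      have h2 := Real.sqrt_le_sqrt hcond
      rwa [Real.sqrt_sq hLnn, Real.sqrt_mul hc.le, Real.sqrt_sq hc₁.le] at h2
    have h3 : 16 * (A * Real.sqrt c) ≤ Real.sqrt c * c₁ := by
      have hAs : A * Real.sqrt c = Real.sqrt M * Real.sqrt c₂ * (K:ℝ) ^ ((3:ℝ)/4) := by
        rw [hAdef]; field_simp
      rw [hAs]
      nlinarith
    have h4 : (16 * A) * Real.sqrt c ≤ c₁ * Real.sqrt c := by nlinarith
    exact le_of_mul_le_mul_right h4 hsc
  have h2r : 2 * r < c₁ := by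
    rw [hrA]
    nlinarith
  -- Objective at β is at most c₂²
  have hQβ : kmeansObj hK βhat β ≤ c₂ ^ 2 := by
    unfold kmeansObj
    have hsum : ∑ i, Finset.univ.inf' (Finset.univ_nonempty_iff.mpr ⟨⟨0, hK⟩⟩)
        (fun l => ‖βhat i - β l‖ ^ 2) ≤ ∑ _i : Fin n, c₂ ^ 2 := by
      refine Finset.sum_le_sum fun i _ => ?_
      refine le_trans (Finset.inf'_le _ (Finset.mem_univ (g i))) ?_
      exact pow_le_pow_left₀ (norm_nonneg _) (hclose i) 2
    have h2 : (n:ℝ)⁻¹ * ∑ _i : Fin n, c₂ ^ 2 = c₂ ^ 2 := by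
      rw [Finset.sum_const, Finset.card_univ, Fintype.card_fin, nsmul_eq_mul]
      field_simp
    rw [← h2]
    exact mul_le_mul_of_nonneg_left hsum (by positivity)
  have hQα : kmeansObj hK βhat αhat ≤ c₂ ^ 2 := (hmin β).trans hQβ
  -- every true centroid has a fitted centroid within r
  have hc₂r : c₂ ≤ r := by rw [hrA]; nlinarith
  have hnear : ∀ k, ∃ l, ‖β k - αhat l‖ ≤ r := by
    intro k
    by_contra h
    push_neg at h
    have hlow : ∀ i : Fin n, g i = k →
        (r - c₂) ^ 2 ≤ Finset.univ.inf' (Finset.univ_nonempty_iff.mpr ⟨⟨0, hK⟩⟩)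
          (fun l => ‖βhat i - αhat l‖ ^ 2) := by
      intro i hi
      refine Finset.le_inf' _ _ fun l _ => ?_
      have htri : ‖β k - αhat l‖ ≤ ‖β k - βhat i‖ + ‖βhat i - αhat l‖ := by
        have := dist_triangle (β k) (βhat i) (αhat l)
        simpa [dist_eq_norm] using this
      have hclose' : ‖β k - βhat i‖ ≤ c₂ := by
        rw [norm_sub_rev, ← hi]; exact hclose i
      have h2 : r - c₂ ≤ ‖βhat i - αhat l‖ := by
        have := h l
        linarith
      exact pow_le_pow_left₀ (by linarith) h2 2
    set S := Finset.univ.filter fun i => g i = k with hSdef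
    have hsumlow : (S.card : ℝ) * (r - c₂) ^ 2 ≤
        ∑ i, Finset.univ.inf' (Finset.univ_nonempty_iff.mpr ⟨⟨0, hK⟩⟩)
          (fun l => ‖βhat i - αhat l‖ ^ 2) := by
      calc (S.card : ℝ) * (r - c₂) ^ 2 = ∑ _i ∈ S, (r - c₂) ^ 2 := by
            rw [Finset.sum_const, nsmul_eq_mul]
        _ ≤ ∑ i ∈ S, Finset.univ.inf' (Finset.univ_nonempty_iff.mpr ⟨⟨0, hK⟩⟩)
              (fun l => ‖βhat i - αhat l‖ ^ 2) :=
            Finset.sum_le_sum fun i hi => hlow i (by simpa [hSdef] using (Finset.mem_filter.mp hi).2)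
        _ ≤ _ := by
            refine Finset.sum_le_sum_of_subset_of_nonneg (Finset.subset_univ S)
              fun i _ _ => ?_
            refine Finset.le_inf' _ _ fun l _ => by positivity
    have hQlow : c / K * (r - c₂) ^ 2 ≤ kmeansObj hK βhat αhat := by
      unfold kmeansObj
      have h1 : c / K * (r - c₂) ^ 2 ≤ ((S.card : ℝ) / n) * (r - c₂) ^ 2 :=
        mul_le_mul_of_nonneg_right (hπ k) (by positivity)
      have h2 : ((S.card : ℝ) / n) * (r - c₂) ^ 2 =
          (n:ℝ)⁻¹ * ((S.card : ℝ) * (r - c₂) ^ 2) := by ring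
      calc c / K * (r - c₂) ^ 2 ≤ (n:ℝ)⁻¹ * ((S.card : ℝ) * (r - c₂) ^ 2) := by
            rw [← h2]; exact h1
        _ ≤ _ := mul_le_mul_of_nonneg_left hsumlow (by positivity)
    have hfinal : c / K * (r - c₂) ^ 2 ≤ c₂ ^ 2 := hQlow.trans hQα
    -- contradiction
    have hrc2 : 2 * A ≤ r - c₂ := by rw [hrA]; nlinarith
    have h3 : (c₂ * Real.sqrt (K:ℝ) / Real.sqrt c) ^ 2 < (r - c₂) ^ 2 := by
      have hBnn : 0 ≤ c₂ * Real.sqrt (K:ℝ) / Real.sqrt c := by positivity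
      nlinarith
    have hsq : (c₂ * Real.sqrt (K:ℝ) / Real.sqrt c) ^ 2 = c₂ ^ 2 * K / c := by
      rw [div_pow, mul_pow, Real.sq_sqrt (by positivity : (0:ℝ) ≤ (K:ℝ)),
        Real.sq_sqrt hc.le]
    have h4 : c / K * (c₂ ^ 2 * K / c) = c₂ ^ 2 := by field_simp
    have h5 : c₂ ^ 2 < c / K * (r - c₂) ^ 2 := by
      have hcK : 0 < c / K := by positivity
      calc c₂ ^ 2 = c / K * (c₂ ^ 2 * K / c) := h4.symm
        _ < c / K * (r - c₂) ^ 2 := by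
            apply mul_lt_mul_of_pos_left _ hcK
            rw [← hsq]; exact h3
    linarith
  choose φ hφ using hnear
  have hinj : Function.Injective φ := by
    intro k k' he
    by_contra hne
    have h1 := hφ k
    have h2 := hφ k'
    have hs := hsep k k' hne
    have htri : ‖β k - β k'‖ ≤ ‖β k - αhat (φ k)‖ + ‖β k' - αhat (φ k')‖ := by
      calc ‖β k - β k'‖ ≤ ‖β k - αhat (φ k')‖ + ‖αhat (φ k') - β k'‖ :=
            norm_sub_le_norm_sub_add_norm_sub _ _ _
        _ = ‖β k - αhat (φ k)‖ + ‖β k' - αhat (φ k')‖ := by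
            rw [he, norm_sub_rev (αhat (φ k')) (β k')]
    linarith
  have hsurj : Function.Surjective φ := Finite.surjective_of_injective hinj
  apply Metric.hausdorffDist_le_of_mem_dist hrpos.le
  · rintro x ⟨l, rfl⟩
    obtain ⟨k, hk⟩ := hsurj l
    refine ⟨β k, Set.mem_range_self k, ?_⟩
    rw [dist_eq_norm, norm_sub_rev, ← hk]
    exact hφ k
  · rintro y ⟨k, rfl⟩
    exact ⟨αhat (φ k), Set.mem_range_self _, by rw [dist_eq_norm]; exact hφ k⟩
end

section
/- (Exact recovery from K-means.) Under the assumptions of the K-means centroid consistency lemma (centroids bounded by M, sup_i ‖β̂ᵢ − β_{gᵢ}‖ ≤ c₂, pairwise centroid separation ≥ c₁, balanced proportions ≥ c/K, and (2c₂√c + 16K^{3/4}M^{1/2}c₂^{1/2})² ≤ c·c₁²), let ĝᵢ = argmin_l ‖β̂ᵢ − α̂_l‖ where {α̂_l} minimizes the K-means objective. If additionally c₂ + 2(15M/c)^{1/2}c₂^{1/2}K^{3/4} < c₁/2, then there is a permutation σ of {1,…,K} such that ĝᵢ = σ(gᵢ) for every i, i.e., the clustering is exactly correct. -/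
open scoped BigOperators

set_option maxHeartbeats 1000000 in
/-- Exact recovery from K-means: assigning each point to its
nearest estimated centroid recovers the true labels up to a permutation. -/
theorem stmt6 (n K : ℕ) (hn : 0 < n) (hK2 : 2 ≤ K) (hK : 0 < K)
    (M c c₁ c₂ : ℝ) (hM : 0 < M) (hc : 0 < c) (hc1 : c ≤ 1)
    (hc₁ : 0 < c₁) (hc₂ : 0 < c₂)
    (β : Fin K → EuclideanSpace ℝ (Fin K)) (βhat : Fin n → EuclideanSpace ℝ (Fin K))
    (g : Fin n → Fin K)
    (hβM : ∀ k, ‖β k‖ ≤ M)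
    (hclose : ∀ i, ‖βhat i - β (g i)‖ ≤ c₂) (hc₂M : c₂ ≤ M)
    (hsep : ∀ k k', k ≠ k' → c₁ ≤ ‖β k - β k'‖)
    (hπ : ∀ k, c / K ≤ ((Finset.univ.filter fun i => g i = k).card : ℝ) / n)
    (hcond : (2 * c₂ * Real.sqrt c +
        16 * (K : ℝ) ^ ((3 : ℝ) / 4) * Real.sqrt M * Real.sqrt c₂) ^ 2 ≤ c * c₁ ^ 2)
    (αhat : Fin K → EuclideanSpace ℝ (Fin K))
    (hmin : ∀ α : Fin K → EuclideanSpace ℝ (Fin K),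
      kmeansObj hK βhat αhat ≤ kmeansObj hK βhat α)
    (ghat : Fin n → Fin K)
    (hghat : ∀ i l, ‖βhat i - αhat (ghat i)‖ ≤ ‖βhat i - αhat l‖)
    (hgap : c₂ + 2 * Real.sqrt (15 * M / c) * Real.sqrt c₂ * (K : ℝ) ^ ((3 : ℝ) / 4)
      < c₁ / 2) :
    ∃ σ : Equiv.Perm (Fin K), ∀ i, ghat i = σ (g i) := by
  have hne : (Finset.univ : Finset (Fin K)).Nonempty :=
    Finset.univ_nonempty_iff.mpr ⟨⟨0, hK⟩⟩
  have hn' : (0:ℝ) < n := by exact_mod_cast hn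
  have hK' : (0:ℝ) < K := by exact_mod_cast hK
  have hK1 : (1:ℝ) ≤ K := by exact_mod_cast Nat.one_le_iff_ne_zero.mpr hK.ne'
  have tri : ∀ x y z : EuclideanSpace ℝ (Fin K), ‖x - z‖ ≤ ‖x - y‖ + ‖y - z‖ := by
    intro x y z
    simpa [dist_eq_norm] using dist_triangle x y z
  -- the radius ρ
  set s := Real.sqrt c with hs_def
  have hs : 0 < s := Real.sqrt_pos.mpr hc
  have hs1 : s ≤ 1 := by
    rw [hs_def, show (1:ℝ) = Real.sqrt 1 by simp]
    exact Real.sqrt_le_sqrt hc1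
  obtain ⟨ρ, hρ_def⟩ : ∃ ρ : ℝ, ρ = c₂ + c₂ * Real.sqrt K / s := ⟨_, rfl⟩
  have hρc₂ : c₂ ≤ ρ := by
    have h0 : 0 ≤ c₂ * Real.sqrt K / s := by positivity
    rw [hρ_def]; linarith
  -- key arithmetic inequality : c₂ + ρ < c₁ / 2
  have hKI : c₂ + ρ < c₁ / 2 := by
    have hmain : ρ ≤ 2 * Real.sqrt (15 * M / c) * Real.sqrt c₂ * (K : ℝ) ^ ((3 : ℝ) / 4) := by
      set a := Real.sqrt M with ha_def
      set b := Real.sqrt c₂ with hb_def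
      set t := (K : ℝ) ^ ((3 : ℝ) / 4) with ht_def
      have ha : 0 < a := Real.sqrt_pos.mpr hM
      have hb : 0 < b := Real.sqrt_pos.mpr hc₂
      have hba : b ≤ a := Real.sqrt_le_sqrt hc₂M
      have hbb : b * b = c₂ := Real.mul_self_sqrt hc₂.le
      have ht1 : (1:ℝ) ≤ t := Real.one_le_rpow hK1 (by norm_num)
      have hut : Real.sqrt K ≤ t := by
        rw [Real.sqrt_eq_rpow, ht_def]
        exact Real.rpow_le_rpow_of_exponent_le hK1 (by norm_num)
      have hu : 0 ≤ Real.sqrt (K:ℝ) := Real.sqrt_nonneg _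
      have hsqrt15 : (1:ℝ) ≤ Real.sqrt 15 := by
        rw [show (1:ℝ) = Real.sqrt 1 by simp]
        exact Real.sqrt_le_sqrt (by norm_num)
      have hrw : Real.sqrt (15 * M / c) = Real.sqrt 15 * a / s := by
        rw [Real.sqrt_div (by positivity), Real.sqrt_mul (by norm_num)]
      rw [hrw, hρ_def]
      have key : c₂ * s + c₂ * Real.sqrt (K:ℝ) ≤ 2 * Real.sqrt 15 * a * b * t := by
        have hab : (0:ℝ) ≤ a * b := mul_nonneg ha.le hb.le
        have h1 : c₂ ≤ a * b := by
          calc c₂ = b * b := hbb.symm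
            _ ≤ a * b := mul_le_mul_of_nonneg_right hba hb.le
        have h2 : c₂ * s ≤ (a * b) * t :=
          mul_le_mul h1 (hs1.trans ht1) hs.le hab
        have h3 : c₂ * Real.sqrt (K:ℝ) ≤ (a * b) * t :=
          mul_le_mul h1 hut hu hab
        have habt : (0:ℝ) ≤ a * b * t := mul_nonneg hab (le_trans zero_le_one ht1)
        have h5 : 2 * (a * b * t) ≤ Real.sqrt 15 * (2 * (a * b * t)) :=
          le_mul_of_one_le_left (by linarith) hsqrt15
        calc c₂ * s + c₂ * Real.sqrt (K:ℝ) ≤ 2 * (a * b * t) := by linarith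
          _ ≤ Real.sqrt 15 * (2 * (a * b * t)) := h5
          _ = 2 * Real.sqrt 15 * a * b * t := by ring
      calc c₂ + c₂ * Real.sqrt (K:ℝ) / s = (c₂ * s + c₂ * Real.sqrt (K:ℝ)) / s := by
            field_simp
        _ ≤ (2 * Real.sqrt 15 * a * b * t) / s := (div_le_div_iff_of_pos_right hs).mpr key
        _ = 2 * (Real.sqrt 15 * a / s) * b * t := by ring
    linarith
  -- Step 1: objective at αhat is at most c₂²
  have hQ : kmeansObj hK βhat αhat ≤ c₂ ^ 2 := by
    refine le_trans (hmin β) ?_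
    unfold kmeansObj
    have hsum : ∑ i, Finset.univ.inf' hne (fun l => ‖βhat i - β l‖ ^ 2)
        ≤ ∑ _i : Fin n, c₂ ^ 2 := by
      refine Finset.sum_le_sum fun i _ => ?_
      refine le_trans (Finset.inf'_le _ (Finset.mem_univ (g i))) ?_
      exact pow_le_pow_left₀ (norm_nonneg _) (hclose i) 2
    have : (n:ℝ)⁻¹ * ∑ i, Finset.univ.inf' hne (fun l => ‖βhat i - β l‖ ^ 2)
        ≤ (n:ℝ)⁻¹ * ((n:ℝ) * c₂ ^ 2) := by
      refine mul_le_mul_of_nonneg_left ?_ (by positivity)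
      simpa [Finset.sum_const, nsmul_eq_mul] using hsum
    calc (n:ℝ)⁻¹ * ∑ i, Finset.univ.inf' hne (fun l => ‖βhat i - β l‖ ^ 2)
        ≤ (n:ℝ)⁻¹ * ((n:ℝ) * c₂ ^ 2) := this
      _ = c₂ ^ 2 := by field_simp
  -- Step 2: every true centroid has a nearby estimated centroid
  have hex : ∀ k, ∃ l, ‖β k - αhat l‖ ≤ ρ := by
    intro k
    by_contra hcon
    push_neg at hcon
    set S := Finset.univ.filter (fun i => g i = k) with hS_def
    have hScard : 0 < (S.card : ℝ) := by
      have h0 : (0:ℝ) < c / K := div_pos hc hK'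
      have h1 : (0:ℝ) < (S.card : ℝ) / n := lt_of_lt_of_le h0 (hπ k)
      rcases div_pos_iff.mp h1 with ⟨h, _⟩ | ⟨_, h⟩
      · exact h
      · linarith
    have hSne : S.Nonempty := by
      rw [← Finset.card_pos]
      exact_mod_cast hScard
    have hρnn : 0 ≤ ρ - c₂ := by linarith
    have hlow : ∀ i ∈ S, (ρ - c₂) ^ 2 <
        Finset.univ.inf' hne (fun l => ‖βhat i - αhat l‖ ^ 2) := by
      intro i hi
      rw [Finset.lt_inf'_iff]
      intro l _
      have hgi : g i = k := (Finset.mem_filter.mp hi).2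
      have h1 : ‖β k - αhat l‖ ≤ ‖β k - βhat i‖ + ‖βhat i - αhat l‖ := tri _ _ _
      have h2 : ‖β k - βhat i‖ ≤ c₂ := by
        rw [norm_sub_rev]
        rw [← hgi]
        exact hclose i
      have h3 : ρ - c₂ < ‖βhat i - αhat l‖ := by
        have := hcon l
        linarith
      exact pow_lt_pow_left₀ h3 hρnn (by norm_num)
    have hsumS : (S.card : ℝ) * (ρ - c₂) ^ 2 <
        ∑ i ∈ S, Finset.univ.inf' hne (fun l => ‖βhat i - αhat l‖ ^ 2) := by
      have := Finset.sum_lt_sum_of_nonempty hSne hlow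
      simpa [Finset.sum_const, nsmul_eq_mul] using this
    have hsub : ∑ i ∈ S, Finset.univ.inf' hne (fun l => ‖βhat i - αhat l‖ ^ 2)
        ≤ ∑ i, Finset.univ.inf' hne (fun l => ‖βhat i - αhat l‖ ^ 2) := by
      refine Finset.sum_le_sum_of_subset_of_nonneg (Finset.subset_univ S) fun i _ _ => ?_
      exact Finset.le_inf' hne _ fun l _ => by positivity
    have hsq : (ρ - c₂) ^ 2 = c₂ ^ 2 * (K:ℝ) / c := by
      have h1 : Real.sqrt (K:ℝ) ^ 2 = (K:ℝ) := Real.sq_sqrt hK'.le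
      have h2 : s ^ 2 = c := Real.sq_sqrt hc.le
      rw [hρ_def, show c₂ + c₂ * Real.sqrt (K:ℝ) / s - c₂ = c₂ * Real.sqrt (K:ℝ) / s by ring,
        div_pow, mul_pow, h1, h2]
    have hchain : c₂ ^ 2 < kmeansObj hK βhat αhat := by
      have e1 : c₂ ^ 2 = (c / K) * ((ρ - c₂) ^ 2) := by
        rw [hsq]; field_simp
      have e2 : (c / K) * ((ρ - c₂) ^ 2) ≤ ((S.card : ℝ) / n) * ((ρ - c₂) ^ 2) :=
        mul_le_mul_of_nonneg_right (hπ k) (by positivity)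
      have e3 : ((S.card : ℝ) / n) * ((ρ - c₂) ^ 2)
          = (n:ℝ)⁻¹ * ((S.card : ℝ) * (ρ - c₂) ^ 2) := by ring
      have e4 : (n:ℝ)⁻¹ * ((S.card : ℝ) * (ρ - c₂) ^ 2)
          < (n:ℝ)⁻¹ * ∑ i ∈ S, Finset.univ.inf' hne (fun l => ‖βhat i - αhat l‖ ^ 2) :=
        mul_lt_mul_of_pos_left hsumS (by positivity)
      have e5 : (n:ℝ)⁻¹ * ∑ i ∈ S, Finset.univ.inf' hne (fun l => ‖βhat i - αhat l‖ ^ 2)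
          ≤ (n:ℝ)⁻¹ * ∑ i, Finset.univ.inf' hne (fun l => ‖βhat i - αhat l‖ ^ 2) :=
        mul_le_mul_of_nonneg_left hsub (by positivity)
      unfold kmeansObj
      linarith
    linarith
  choose σ0 hσ0 using hex
  have hρhalf : ρ < c₁ / 2 := by linarith
  have hinj : Function.Injective σ0 := by
    intro k k' hkk'
    by_contra hne'
    have h1 : c₁ ≤ ‖β k - β k'‖ := hsep k k' hne'
    have h2 : ‖β k - β k'‖ ≤ ‖β k - αhat (σ0 k)‖ + ‖αhat (σ0 k) - β k'‖ := tri _ _ _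
    have h3 : ‖αhat (σ0 k) - β k'‖ = ‖β k' - αhat (σ0 k')‖ := by
      rw [norm_sub_rev, hkk']
    have := hσ0 k
    have := hσ0 k'
    linarith
  have hbij : Function.Bijective σ0 := Finite.injective_iff_bijective.mp hinj
  refine ⟨Equiv.ofBijective σ0 hbij, fun i => ?_⟩
  simp only [Equiv.ofBijective_apply]
  by_contra hcontra
  set k' := (Equiv.ofBijective σ0 hbij).symm (ghat i) with hk'_def
  have hk' : σ0 k' = ghat i :=
    (Equiv.ofBijective σ0 hbij).apply_symm_apply (ghat i)
  have hnek : g i ≠ k' := by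
    intro h
    exact hcontra (by rw [h, hk'])
  have h1 : ‖βhat i - αhat (σ0 (g i))‖ ≤ c₂ + ρ := by
    have := tri (βhat i) (β (g i)) (αhat (σ0 (g i)))
    have := hclose i
    have := hσ0 (g i)
    linarith
  have h2 : ‖βhat i - αhat (ghat i)‖ ≤ c₂ + ρ := le_trans (hghat i (σ0 (g i))) h1
  have h3 : c₁ ≤ ‖β (g i) - β k'‖ := hsep _ _ hnek
  have h4 : ‖β (g i) - β k'‖ ≤ ‖β (g i) - βhat i‖ + ‖βhat i - β k'‖ := tri _ _ _
  have h5 : ‖βhat i - β k'‖ ≤ ‖βhat i - αhat (ghat i)‖ + ‖αhat (ghat i) - β k'‖ := tri _ _ _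
  have h6 : ‖β (g i) - βhat i‖ ≤ c₂ := by rw [norm_sub_rev]; exact hclose i
  have h7 : ‖αhat (ghat i) - β k'‖ ≤ ρ := by
    rw [norm_sub_rev, ← hk']
    exact hσ0 k'
  linarith
end

section
/- (Perturbation of the Laplacian by degree estimation.) Let L' = D^{-1/2} A D^{-1/2} and L̃ = 𝓓^{-1/2} A 𝓓^{-1/2} with D = diag(d̂₁,…,d̂ₙ), 𝓓 = diag(d₁,…,dₙ), all entries positive. If ‖L'‖ ≤ 1 and max_i |d̂ᵢ/dᵢ − 1| ≤ ε ≤ 1, then ‖L̃ − L'‖ ≤ ε(1+ε) + ε = ε(2+ε). In particular if ε ≤ 2.09·δ for some δ ≤ 0.01 then ‖L̃ − L'‖ ≤ 4.39·δ. -/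
open scoped BigOperators Matrix

open scoped Matrix.Norms.L2Operator

lemma diag_norm_le {n : ℕ} (v : Fin n → ℝ) (c : ℝ) (hc : 0 ≤ c)
    (h : ∀ i, |v i| ≤ c) : ‖Matrix.diagonal v‖ ≤ c := by
  rw [Matrix.l2_opNorm_def]
  refine ContinuousLinearMap.opNorm_le_bound _ hc fun x => ?_
  have h1 : ‖(Matrix.toEuclideanLin.trans LinearMap.toContinuousLinearMap)
      (Matrix.diagonal v) x‖ = Real.sqrt (∑ i, (v i * x i)^2) := by
    simp [EuclideanSpace.norm_eq, Matrix.toEuclideanLin_apply, Matrix.mulVec_diagonal,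
      Real.norm_eq_abs, sq_abs, abs_mul, mul_pow]
  have h2 : c * ‖x‖ = Real.sqrt (c^2 * ∑ i, (x i)^2) := by
    rw [Real.sqrt_mul (sq_nonneg c), Real.sqrt_sq hc, EuclideanSpace.norm_eq]
    simp [Real.norm_eq_abs, sq_abs]
  rw [h1, h2, Finset.mul_sum]
  apply Real.sqrt_le_sqrt
  apply Finset.sum_le_sum
  intro i _
  have := h i
  rw [mul_pow]
  have h3 : (v i)^2 ≤ c^2 := sq_le_sq' (by linarith [abs_le.1 (h i)]) (abs_le.1 (h i)).2
  nlinarith [sq_nonneg (x i)]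

/-- Perturbation of the Laplacian caused by estimated degrees:
if `‖L'‖ ≤ 1` and `max_i |d̂ᵢ/dᵢ − 1| ≤ ε ≤ 1`, then `‖L̃ − L'‖ ≤ ε(2+ε)`,
and in particular `ε ≤ 2.09·δ` with `δ ≤ 0.01` gives `‖L̃ − L'‖ ≤ 4.39·δ`. -/
theorem stmt13 (n : ℕ) (A : Matrix (Fin n) (Fin n) ℝ) (hA : A.IsSymm)
    (dhat d : Fin n → ℝ) (hdhat : ∀ i, 0 < dhat i) (hd : ∀ i, 0 < d i)
    (L' Lt : Matrix (Fin n) (Fin n) ℝ)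
    (hL' : L' = (Matrix.diagonal fun i => (Real.sqrt (dhat i))⁻¹) * A *
      (Matrix.diagonal fun i => (Real.sqrt (dhat i))⁻¹))
    (hLt : Lt = (Matrix.diagonal fun i => (Real.sqrt (d i))⁻¹) * A *
      (Matrix.diagonal fun i => (Real.sqrt (d i))⁻¹))
    (hnorm : specNorm L' ≤ 1)
    (ε : ℝ) (hε0 : 0 ≤ ε) (hε1 : ε ≤ 1)
    (hεbound : ∀ i, |dhat i / d i - 1| ≤ ε) :
    specNorm (Lt - L') ≤ ε * (2 + ε) ∧
    ∀ δ : ℝ, 0 ≤ δ → δ ≤ 0.01 → ε ≤ 2.09 * δ → specNorm (Lt - L') ≤ 4.39 * δ := by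
  classical
  set e : Fin n → ℝ := fun i => Real.sqrt (dhat i / d i) with he
  set E := Matrix.diagonal e with hE
  set X := (Matrix.diagonal fun i => (Real.sqrt (dhat i))⁻¹) with hX
  -- Lt = E * L' * E
  have hfun : (fun i => e i * (Real.sqrt (dhat i))⁻¹) = fun i => (Real.sqrt (d i))⁻¹ := by
    funext i
    have hda : Real.sqrt (dhat i) ≠ 0 := (Real.sqrt_pos.2 (hdhat i)).ne'
    have hdb : Real.sqrt (d i) ≠ 0 := (Real.sqrt_pos.2 (hd i)).ne'
    show Real.sqrt (dhat i / d i) * (Real.sqrt (dhat i))⁻¹ = (Real.sqrt (d i))⁻¹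
    rw [Real.sqrt_div (hdhat i).le]
    field_simp
  have h1 : E * X = Matrix.diagonal fun i => (Real.sqrt (d i))⁻¹ := by
    rw [hE, hX, Matrix.diagonal_mul_diagonal, hfun]
  have h2 : X * E = Matrix.diagonal fun i => (Real.sqrt (d i))⁻¹ := by
    have hfun2 : (fun i => (Real.sqrt (dhat i))⁻¹ * e i) = fun i => e i * (Real.sqrt (dhat i))⁻¹ := by
      funext i; ring
    rw [hE, hX, Matrix.diagonal_mul_diagonal, hfun2, hfun]
  have hkey : Lt = E * L' * E := by
    rw [hLt, hL']
    simp only [← Matrix.mul_assoc]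
    rw [h1, Matrix.mul_assoc _ X E, h2]
  -- entrywise bounds
  have hei : ∀ i, |e i - 1| ≤ ε := by
    intro i
    have ht : 0 < dhat i / d i := div_pos (hdhat i) (hd i)
    have hs : Real.sqrt (dhat i / d i) ^ 2 = dhat i / d i := Real.sq_sqrt ht.le
    have hs0 : 0 ≤ Real.sqrt (dhat i / d i) := Real.sqrt_nonneg _
    have hb := abs_le.1 (hεbound i)
    rw [he]
    simp only
    rw [abs_le]
    constructor <;>
      nlinarith [sq_nonneg (Real.sqrt (dhat i / d i) - 1),
        sq_nonneg (Real.sqrt (dhat i / d i) + 1), hb.1, hb.2]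
  have hEm1 : ‖E - 1‖ ≤ ε := by
    have : E - 1 = Matrix.diagonal (fun i => e i - 1) := by
      rw [hE, ← Matrix.diagonal_one, Matrix.diagonal_sub]
    rw [this]
    exact diag_norm_le _ _ hε0 hei
  have hEn : ‖E‖ ≤ 1 + ε := by
    rw [hE]
    refine diag_norm_le _ _ (by linarith) fun i => ?_
    have := abs_le.1 (hei i)
    have h0 : 0 ≤ e i := Real.sqrt_nonneg _
    rw [abs_of_nonneg h0]; linarith
  have hL'n : ‖L'‖ ≤ 1 := hnorm
  have hsplit : Lt - L' = (E - 1) * L' * E + L' * (E - 1) := by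
    rw [hkey]; noncomm_ring
  have hmain : specNorm (Lt - L') ≤ ε * (2 + ε) := by
    rw [specNorm_eq, hsplit]
    have t1 : ‖(E - 1) * L' * E‖ ≤ ε * 1 * (1 + ε) := by
      calc ‖(E - 1) * L' * E‖ ≤ ‖(E - 1) * L'‖ * ‖E‖ := Matrix.l2_opNorm_mul _ _
        _ ≤ (‖E - 1‖ * ‖L'‖) * ‖E‖ :=
          mul_le_mul_of_nonneg_right (Matrix.l2_opNorm_mul _ _) (norm_nonneg _)
        _ ≤ ε * 1 * (1 + ε) :=
          mul_le_mul (mul_le_mul hEm1 hL'n (norm_nonneg _) hε0) hEn (norm_nonneg _)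
            (by nlinarith)
    have t2 : ‖L' * (E - 1)‖ ≤ 1 * ε := by
      calc ‖L' * (E - 1)‖ ≤ ‖L'‖ * ‖E - 1‖ := Matrix.l2_opNorm_mul _ _
        _ ≤ 1 * ε := mul_le_mul hL'n hEm1 (norm_nonneg _) zero_le_one
    calc ‖(E - 1) * L' * E + L' * (E - 1)‖ ≤ ‖(E - 1) * L' * E‖ + ‖L' * (E - 1)‖ :=
        norm_add_le _ _
      _ ≤ ε * 1 * (1 + ε) + 1 * ε := add_le_add t1 t2
      _ = ε * (2 + ε) := by ring
  refine ⟨hmain, fun δ hδ0 hδ1 hεδ => ?_⟩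
  nlinarith [hmain, mul_nonneg hδ0 hδ0, mul_le_mul_of_nonneg_right hεδ (by linarith : (0:ℝ) ≤ 2 + ε)]
end
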